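/- Let d ≥ 2, p ∈ (2, 2(d-1)/(d-2)) (with p ∈ (2,∞) if d = 2), and define β := (p-2) / (4(d-1) - 2p(d-2)) and λ := 1/(2β(d-1)+1). Then λ ∈ (0,1), and the fractional Sobolev embeddings W^{λβ,2}(0,1) ↪ L^p(0,1) and W^{(1-λ)/2,2}(B) ↪ L^p(B) hold, where B = (-1,1)^{d-1}. -/

import Mathlib

set_option maxHeartbeats 1000000
open MeasureTheory
open scoped ENNReal

namespace S12

lemma zpow_le_iff {t : ℝ} (ht : 0 < t) (j : ℤ) :
    (2:ℝ)^j ≤ t ↔ j ≤ ⌊Real.logb 2 t⌋ := by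
  rw [Int.le_floor]
  constructor
  · intro h
    have h2 : (2:ℝ)^(j:ℝ) ≤ (2:ℝ)^(Real.logb 2 t) := by
      rw [Real.rpow_intCast, Real.rpow_logb two_pos (by norm_num) ht]; exact h
    exact (Real.rpow_le_rpow_left_iff one_lt_two).1 h2
  · intro h
    have h2 := (Real.rpow_le_rpow_left_iff (x:=(2:ℝ)) one_lt_two).2 h
    rwa [Real.rpow_intCast, Real.rpow_logb two_pos (by norm_num) ht] at h2

lemma tsum_dyadic_le (q t : ℝ) (hq : 0 < q) (ht : 0 < t) :
    ∑' j : ℤ, (if (2:ℝ)^j ≤ t then ENNReal.ofReal (((2:ℝ)^j)^q) else 0)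
      ≤ ENNReal.ofReal ((1 - (2:ℝ)^(-q))⁻¹ * t^q) := by
  set N : ℤ := ⌊Real.logb 2 t⌋ with hN
  set f : ℤ → ENNReal := fun j => (if (2:ℝ)^j ≤ t then ENNReal.ofReal (((2:ℝ)^j)^q) else 0) with hf
  have hinj : Function.Injective (fun k : ℕ => N - (k:ℤ)) := by
    intro a b h; simpa using h
  have hsupp : Function.support f ⊆ Set.range (fun k : ℕ => N - (k:ℤ)) := by
    intro j hj
    have hcond : (2:ℝ)^j ≤ t := by
      by_contra hc; simp [hf, hc] at hj
    have hjN : j ≤ N := (zpow_le_iff ht j).1 hcond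
    exact ⟨(N - j).toNat, by simp [Int.toNat_of_nonneg (by omega : (0:ℤ) ≤ N - j)]⟩
  have heq : ∑' k : ℕ, f (N - (k:ℤ)) = ∑' j : ℤ, f j := hinj.tsum_eq hsupp
  rw [← heq]
  have h2N : (2:ℝ)^N ≤ t := (zpow_le_iff ht N).2 le_rfl
  have hr01 : (0:ℝ) ≤ (2:ℝ)^(-q) := Real.rpow_nonneg (by norm_num) _
  have hrlt1 : (2:ℝ)^(-q) < 1 := by
    have := Real.rpow_lt_rpow_of_exponent_lt (x := (2:ℝ)) one_lt_two (by linarith : -q < 0)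
    simpa using this
  have hterm : ∀ k : ℕ, f (N - (k:ℤ)) =
      ENNReal.ofReal (((2:ℝ)^N)^q) * (ENNReal.ofReal ((2:ℝ)^(-q)))^k := by
    intro k
    have hle : (2:ℝ)^(N - (k:ℤ)) ≤ t :=
      le_trans (by
        apply zpow_le_zpow_right₀ (by norm_num : (1:ℝ) ≤ 2)
        omega) h2N
    have hsplit : ((2:ℝ)^(N - (k:ℤ)))^q = ((2:ℝ)^N)^q * ((2:ℝ)^(-q))^k := by
      have h1 : (2:ℝ)^(N - (k:ℤ)) = (2:ℝ)^N * ((2:ℝ)⁻¹)^k := by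
        rw [zpow_sub₀ (by norm_num : (2:ℝ) ≠ 0)]
        rw [zpow_natCast, inv_pow]
        ring
      rw [h1, Real.mul_rpow (by positivity) (by positivity)]
      congr 1
      have e1 : ((2:ℝ)⁻¹) ^ (k:ℕ) = (2:ℝ) ^ (-(k:ℝ)) := by
        rw [← Real.rpow_natCast ((2:ℝ)⁻¹) k, Real.inv_rpow (by norm_num),
          ← Real.rpow_neg (by norm_num)]
      rw [e1, ← Real.rpow_natCast ((2:ℝ)^(-q)) k, ← Real.rpow_mul (by norm_num),
        ← Real.rpow_mul (by norm_num)]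
      congr 1
      ring
    rw [hf]
    simp only [if_pos hle, hsplit]
    rw [ENNReal.ofReal_mul (by positivity), ENNReal.ofReal_pow hr01]
  calc ∑' k : ℕ, f (N - (k:ℤ))
      = ENNReal.ofReal (((2:ℝ)^N)^q) * ∑' k : ℕ, (ENNReal.ofReal ((2:ℝ)^(-q)))^k := by
        rw [← ENNReal.tsum_mul_left]; exact tsum_congr hterm
    _ = ENNReal.ofReal (((2:ℝ)^N)^q) * ENNReal.ofReal ((1 - (2:ℝ)^(-q))⁻¹) := by
        rw [ENNReal.tsum_geometric]
        congr 1
        rw [ENNReal.ofReal_inv_of_pos (by linarith : (0:ℝ) < 1 - (2:ℝ)^(-q))]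
        congr 1
        rw [ENNReal.ofReal_sub _ hr01, ENNReal.ofReal_one]
    _ ≤ ENNReal.ofReal (t^q) * ENNReal.ofReal ((1 - (2:ℝ)^(-q))⁻¹) := by
        exact mul_le_mul_left (ENNReal.ofReal_le_ofReal
          (Real.rpow_le_rpow (by positivity) h2N hq.le)) _
    _ = ENNReal.ofReal ((1 - (2:ℝ)^(-q))⁻¹ * t^q) := by
        rw [← ENNReal.ofReal_mul (by positivity), mul_comm]



-- self-improvement via weighted AM-GM
lemma selfimprove (κ k1 k2 x : ℝ) (hκ0 : 0 < κ) (hκ1 : κ < 1) (hx : 0 ≤ x)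
    (hk1 : 0 ≤ k1) (hk2 : 0 ≤ k2) (h : x ≤ k1 + k2 * x ^ κ) :
    x ≤ 2*k1 + 2*((1-κ)*(k2*(2*κ)^κ)^(1/(1-κ))) := by
  set P := (k2*(2*κ)^κ)^(1/(1-κ)) with hP
  have hPnn : 0 ≤ P := Real.rpow_nonneg (by positivity) _
  have key : k2 * x ^ κ ≤ κ * (x/(2*κ)) + (1-κ) * P := by
    have h2κ : (0:ℝ) < 2*κ := by linarith
    have hgm := Real.geom_mean_le_arith_mean2_weighted (w₁ := κ) (w₂ := 1-κ)
      (p₁ := x/(2*κ)) (p₂ := P) hκ0.le (by linarith) (by positivity) hPnn (by ring)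
    have e1 : (x/(2*κ))^κ * P^(1-κ) = k2 * x^κ := by
      have eP : P^(1-κ) = k2*(2*κ)^κ := by
        rw [hP, ← Real.rpow_mul (by positivity), one_div,
          inv_mul_cancel₀ (by linarith : (1:ℝ)-κ ≠ 0), Real.rpow_one]
      rw [eP, Real.div_rpow hx h2κ.le]
      field_simp
    rw [e1] at hgm
    exact hgm
  have : x ≤ k1 + x/2 + (1-κ)*P := by
    have : κ * (x/(2*κ)) = x/2 := by field_simp
    linarith [h, key, this]
  linarith



theorem master {X : Type*} [MeasurableSpace X] [MetricSpace X] [BorelSpace X]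
    [SecondCountableTopology X]
    (μ : Measure X) [SigmaFinite μ]
    (Ω : Set X) (hΩ : MeasurableSet Ω) (hΩfin : μ Ω ≠ ⊤)
    (ν s p c₀ R₀ : ℝ) (hν : 0 < ν) (hp : 2 < p) (hs : 2 * s / ν = (p - 2) / p)
    (hc₀ : 0 < c₀) (hR₀ : 0 < R₀)
    (hreg : ∀ x ∈ Ω, ∀ r : ℝ, 0 < r → r ≤ R₀ →
      ENNReal.ofReal (c₀ * r ^ ν) ≤ μ (Metric.ball x r ∩ Ω)) :
    ∃ C : ℝ, 0 < C ∧ ∀ g : X → ℝ, Measurable g → (∀ x, 0 ≤ g x) →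
      (∫⁻ x in Ω, ENNReal.ofReal (g x ^ 2) ∂μ) ≤ 1 →
      (∫⁻ q in Ω ×ˢ Ω, ENNReal.ofReal ((g q.1 - g q.2)^2 / dist q.1 q.2 ^ (ν + 2*s))
        ∂(μ.prod μ)) ≤ 1 →
      (∫⁻ x in Ω, ENNReal.ofReal (g x ^ p) ∂μ) ≤ ENNReal.ofReal C := by
  have hp0 : (0:ℝ) < p := by linarith
  have hspos : 0 < s := by
    have h1 : 0 < (p-2)/p := div_pos (by linarith) hp0
    rw [← hs] at h1
    have h2 := mul_pos h1 hν
    rw [div_mul_cancel₀ _ hν.ne'] at h2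
    linarith
  set κ := (p-2)/p with hκdef
  have hκ0 : 0 < κ := div_pos (by linarith) hp0
  have hκ1 : κ < 1 := by rw [hκdef, div_lt_one hp0]; linarith
  have hκp : p * κ = p - 2 := by rw [hκdef]; field_simp
  set e := ν + 2*s with hedef
  have he0 : 0 < e := by rw [hedef]; linarith
  have heν : e * ν⁻¹ = 1 + κ := by
    rw [hedef, ← hs]
    field_simp
  set m₀ := c₀ * R₀^ν / 2 with hm₀def
  have hm₀0 : 0 < m₀ := by rw [hm₀def]; positivity
  set t₀ := Real.sqrt (1/m₀) with ht₀def
  set t₁ := max (2*t₀) 1 with ht₁def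
  have ht₁ : 0 < t₁ := lt_of_lt_of_le one_pos (le_max_right _ _)
  have h2p : (0:ℝ) < (2:ℝ)^p := Real.rpow_pos_of_pos two_pos p
  set cp := (1 - (2:ℝ)^(-p))⁻¹ with hcpdef
  have h2mp : (2:ℝ)^(-p) < 1 := by
    have := Real.rpow_lt_rpow_of_exponent_lt (x := (2:ℝ)) one_lt_two (by linarith : -p < 0)
    simpa using this
  have hcp0 : 0 < cp := by rw [hcpdef]; exact inv_pos.2 (by linarith)
  set Cg := (2:ℝ)^p * (2/c₀)^(1+κ) with hCgdef
  have hCg0 : 0 < Cg := by rw [hCgdef]; positivity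
  set k2 := Cg * (4/3) with hk2def
  have hk20 : 0 ≤ k2 := by rw [hk2def]; positivity
  set k1 := cp * t₁^p * (μ Ω).toReal with hk1def
  have hk10 : 0 ≤ k1 := by
    rw [hk1def]
    have : (0:ℝ) ≤ (μ Ω).toReal := ENNReal.toReal_nonneg
    positivity
  set CS := 2*k1 + 2*((1-κ)*(k2*(2*κ)^κ)^(1/(1-κ))) with hCSdef
  have hCS0 : 0 ≤ CS := by
    rw [hCSdef]
    have h1 : (0:ℝ) ≤ (k2*(2*κ)^κ)^(1/(1-κ)) := Real.rpow_nonneg (by positivity) _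
    nlinarith
  refine ⟨1 + (2:ℝ)^p * CS, by nlinarith, ?_⟩
  intro g hg hgnn hA hB
  -- dyadic weights and level sets
  set w : ℤ → ℝ := fun j => (2:ℝ)^j with hw
  have hw0 : ∀ j, 0 < w j := fun j => zpow_pos (by norm_num) j
  have hwsucc : ∀ j, w (j+1) = 2 * w j := by
    intro j
    show (2:ℝ)^(j+1) = 2 * (2:ℝ)^j
    rw [zpow_add₀ (by norm_num : (2:ℝ) ≠ 0)]
    ring
  have hset : ∀ j : ℤ, MeasurableSet (Ω ∩ {x | w j ≤ g x}) :=
    fun j => hΩ.inter (measurableSet_le measurable_const hg)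
  set a : ℤ → ℝ≥0∞ := fun j => μ (Ω ∩ {x | w j ≤ g x}) with ha
  have hafin : ∀ j, a j ≠ ⊤ :=
    fun j => ((measure_mono Set.inter_subset_left).trans_lt (lt_top_iff_ne_top.2 hΩfin)).ne
  have haμ : ∀ j, a j ≤ μ Ω := fun j => measure_mono Set.inter_subset_left
  have hamono : ∀ j : ℤ, a (j+1) ≤ a j := by
    intro j
    apply measure_mono
    apply Set.inter_subset_inter_right
    intro x hx
    have h1 : w j ≤ w (j+1) := by rw [hwsucc j]; linarith [hw0 j]
    exact le_trans h1 hx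
  set T : ℤ → ℝ≥0∞ := fun j => ENNReal.ofReal (w j ^ p) * a j with hT
  have hTfin : ∀ j, T j ≠ ⊤ := fun j => ENNReal.mul_ne_top ENNReal.ofReal_ne_top (hafin j)
  -- kernel infrastructure
  set ρ := (μ.prod μ).restrict (Ω ×ˢ Ω) with hρ
  set ker : X × X → ℝ≥0∞ := fun q => ENNReal.ofReal (dist q.1 q.2 ^ (-e)) with hker
  have hkermeas : Measurable ker := (measurable_dist.pow measurable_const).ennreal_ofReal
  set K : X × X → ℝ≥0∞ :=
    fun q => ENNReal.ofReal ((g q.1 - g q.2)^2 / dist q.1 q.2 ^ e) with hK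
  have hBtot : ∫⁻ q, K q ∂ρ ≤ 1 := hB
  set Q : ℤ → Set (X × X) := fun j => {q | w (j+1) ≤ g q.1 ∧ g q.2 < w j} with hQ
  have hQmeas : ∀ j, MeasurableSet (Q j) := fun j =>
    (measurableSet_le measurable_const (hg.comp measurable_fst)).inter
      (measurableSet_lt (hg.comp measurable_snd) measurable_const)
  set D : ℤ → ℝ≥0∞ := fun j => ∫⁻ q in Q j, ker q ∂ρ with hD
  -- B1 : dyadic decomposition of the Gagliardo energy
  have hindrepr : ∀ j : ℤ, ENNReal.ofReal (w j ^ (2:ℝ)) * D j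
      = ∫⁻ q, (Q j).indicator (fun _ => ENNReal.ofReal (w j ^ (2:ℝ))) q * ker q ∂ρ := by
    intro j
    have hcong : ∀ q, (Q j).indicator (fun _ => ENNReal.ofReal (w j ^ (2:ℝ))) q * ker q
        = (Q j).indicator (fun q' => ENNReal.ofReal (w j ^ (2:ℝ)) * ker q') q := by
      intro q; by_cases hq : q ∈ Q j <;> simp [hq]
    rw [lintegral_congr hcong, lintegral_indicator (hQmeas j),
      lintegral_const_mul _ hkermeas]
  have hptB1 : ∀ q : X × X,
      (∑' j : ℤ, (Q j).indicator (fun _ => ENNReal.ofReal (w j ^ (2:ℝ))) q) * ker q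
        ≤ ENNReal.ofReal (4/3) * K q := by
    intro q
    by_cases hex : ∃ j, q ∈ Q j
    · obtain ⟨j₀, hj₀⟩ := hex
      have hwj₀ : 0 < w j₀ := hw0 j₀
      have hsucc₀ : w (j₀+1) = 2 * w j₀ := hwsucc j₀
      have hj₀1 : w (j₀+1) ≤ g q.1 := hj₀.1
      have hj₀2 : g q.2 < w j₀ := hj₀.2
      have ht : 0 < g q.1 - g q.2 := by rw [hsucc₀] at hj₀1; linarith
      have hne : q.1 ≠ q.2 := by
        intro h; rw [h] at hj₀1; rw [hsucc₀] at hj₀1; linarith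
      have hdd : 0 < dist q.1 q.2 := dist_pos.2 hne
      have hterm : ∀ j : ℤ, (Q j).indicator (fun _ => ENNReal.ofReal (w j ^ (2:ℝ))) q
          ≤ (if (2:ℝ)^j ≤ g q.1 - g q.2 then ENNReal.ofReal (((2:ℝ)^j) ^ (2:ℝ)) else 0) := by
        intro j
        by_cases hq : q ∈ Q j
        · have h1 : w (j+1) ≤ g q.1 := hq.1
          have h2 : g q.2 < w j := hq.2
          have hle : (2:ℝ)^j ≤ g q.1 - g q.2 := by
            rw [hwsucc j] at h1
            have : w j = (2:ℝ)^j := rfl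
            linarith [hw0 j]
          rw [Set.indicator_of_mem hq, if_pos hle]
        · rw [Set.indicator_of_notMem hq]
          exact zero_le
      have hsum := ENNReal.tsum_le_tsum hterm
      have hZ := tsum_dyadic_le 2 (g q.1 - g q.2) two_pos ht
      have hconst : ((1:ℝ) - (2:ℝ)^(-(2:ℝ)))⁻¹ = 4/3 := by
        rw [show (-(2:ℝ)) = ((-2:ℤ):ℝ) by norm_num, Real.rpow_intCast]
        norm_num
      have hker_eq : ker q = ENNReal.ofReal ((dist q.1 q.2 ^ e)⁻¹) := by
        show ENNReal.ofReal (dist q.1 q.2 ^ (-e)) = ENNReal.ofReal ((dist q.1 q.2 ^ e)⁻¹)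
        congr 1
        exact Real.rpow_neg (dist_nonneg : (0:ℝ) ≤ dist q.1 q.2) e
      calc (∑' j : ℤ, (Q j).indicator (fun _ => ENNReal.ofReal (w j ^ (2:ℝ))) q) * ker q
          ≤ (∑' j : ℤ, if (2:ℝ)^j ≤ g q.1 - g q.2 then
              ENNReal.ofReal (((2:ℝ)^j) ^ (2:ℝ)) else 0) * ker q :=
            mul_le_mul_left hsum _
        _ ≤ ENNReal.ofReal (((1:ℝ) - (2:ℝ)^(-(2:ℝ)))⁻¹ * (g q.1 - g q.2)^(2:ℝ)) * ker q :=
            mul_le_mul_left hZ _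
        _ = ENNReal.ofReal (4/3) * K q := by
            rw [hconst, hker_eq, ← ENNReal.ofReal_mul (by positivity)]
            rw [hK]
            rw [← ENNReal.ofReal_mul (by norm_num)]
            congr 1
            rw [Real.rpow_two]
            rw [div_eq_mul_inv]
            ring
    · push_neg at hex
      have hzero : ∀ j : ℤ, (Q j).indicator (fun _ => ENNReal.ofReal (w j ^ (2:ℝ))) q = 0 :=
        fun j => Set.indicator_of_notMem (hex j) _
      rw [tsum_congr hzero]
      simp
  have hB1 : ∑' j : ℤ, ENNReal.ofReal (w j ^ (2:ℝ)) * D j ≤ ENNReal.ofReal (4/3) := by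
    have hmeas : ∀ j : ℤ, AEMeasurable
        (fun q => (Q j).indicator (fun _ => ENNReal.ofReal (w j ^ (2:ℝ))) q * ker q) ρ :=
      fun j => ((measurable_const.indicator (hQmeas j)).mul hkermeas).aemeasurable
    calc ∑' j : ℤ, ENNReal.ofReal (w j ^ (2:ℝ)) * D j
        = ∑' j : ℤ, ∫⁻ q, (Q j).indicator (fun _ => ENNReal.ofReal (w j ^ (2:ℝ))) q * ker q ∂ρ :=
          tsum_congr hindrepr
      _ = ∫⁻ q, ∑' j : ℤ, (Q j).indicator (fun _ => ENNReal.ofReal (w j ^ (2:ℝ))) q * ker q ∂ρ :=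
          (lintegral_tsum hmeas).symm
      _ = ∫⁻ q, (∑' j : ℤ, (Q j).indicator (fun _ => ENNReal.ofReal (w j ^ (2:ℝ))) q) * ker q ∂ρ := by
          apply lintegral_congr; intro q; rw [ENNReal.tsum_mul_right]
      _ ≤ ∫⁻ q, ENNReal.ofReal (4/3) * K q ∂ρ := lintegral_mono hptB1
      _ = ENNReal.ofReal (4/3) * ∫⁻ q, K q ∂ρ := lintegral_const_mul _ (by
          rw [hK]
          exact (((hg.comp measurable_fst).sub (hg.comp measurable_snd)).pow_const 2).div
            (measurable_dist.pow measurable_const) |>.ennreal_ofReal)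
      _ ≤ ENNReal.ofReal (4/3) * 1 := mul_le_mul_right hBtot _
      _ = ENNReal.ofReal (4/3) := mul_one _
  -- B2 : the key step
  have hstep : ∀ j : ℤ, a j ≤ ENNReal.ofReal m₀ → a j ≠ 0 →
      a (j+1) ≤ ENNReal.ofReal ((2/c₀)^(1+κ)) * ((a j)^κ * D j) := by
    intro j hgood hpos
    set α := (a j).toReal with hα
    have hα0 : 0 < α := ENNReal.toReal_pos hpos (hafin j)
    set r := (2*α/c₀) ^ ν⁻¹ with hrdef
    have hr0 : 0 < r := Real.rpow_pos_of_pos (by positivity) _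
    have hαm₀ : α ≤ m₀ := by
      have h := ENNReal.toReal_mono ENNReal.ofReal_ne_top hgood
      rwa [ENNReal.toReal_ofReal hm₀0.le] at h
    have hrR₀ : r ≤ R₀ := by
      rw [hrdef]
      have h1 : 2*α/c₀ ≤ R₀^ν := by
        rw [div_le_iff₀ hc₀, hm₀def] at *
        nlinarith [hαm₀]
      calc (2*α/c₀)^ν⁻¹ ≤ (R₀^ν)^ν⁻¹ := Real.rpow_le_rpow (by positivity) h1 (by positivity)
        _ = R₀ := by
            rw [← Real.rpow_mul hR₀.le, mul_inv_cancel₀ hν.ne', Real.rpow_one]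
    have hrν : c₀ * r ^ ν = 2*α := by
      rw [hrdef, ← Real.rpow_mul (by positivity), inv_mul_cancel₀ hν.ne', Real.rpow_one]
      field_simp
    set Rc := ((Ω ∩ {x | w (j+1) ≤ g x}) ×ˢ (Ω ∩ {x | g x < w j}))
      ∩ {q : X × X | dist q.1 q.2 < r} with hRcdef
    have hRcmeas : MeasurableSet Rc :=
      ((hset (j+1)).prod (hΩ.inter (measurableSet_lt hg measurable_const))).inter
        (measurableSet_lt (measurable_dist (α := X)) measurable_const)
    have hsec : ∀ x ∈ Ω ∩ {x | w (j+1) ≤ g x}, a j ≤ μ (Prod.mk x ⁻¹' Rc) := by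
      intro x hx
      have hpre : (Ω ∩ {y | g y < w j}) ∩ Metric.ball x r ⊆ Prod.mk x ⁻¹' Rc := by
        intro y hy
        refine ⟨⟨hx, hy.1⟩, ?_⟩
        have hb := hy.2
        rw [Metric.mem_ball] at hb
        show dist x y < r
        rwa [dist_comm]
      have hcov : Metric.ball x r ∩ Ω ⊆
          ((Ω ∩ {y | g y < w j}) ∩ Metric.ball x r) ∪ (Ω ∩ {y | w j ≤ g y}) := by
        intro y hy
        by_cases hgy : g y < w j
        · exact Or.inl ⟨⟨hy.2, hgy⟩, hy.1⟩
        · exact Or.inr ⟨hy.2, le_of_not_gt hgy⟩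
      have h2a : a j + a j ≤ μ ((Ω ∩ {y | g y < w j}) ∩ Metric.ball x r) + a j := by
        have hreg' := hreg x hx.1 r hr0 hrR₀
        calc a j + a j = 2 * a j := (two_mul _).symm
          _ = ENNReal.ofReal (c₀ * r^ν) := by
              rw [hrν, ENNReal.ofReal_mul (by norm_num : (0:ℝ) ≤ 2),
                ENNReal.ofReal_toReal (hafin j), ENNReal.ofReal_ofNat]
          _ ≤ μ (Metric.ball x r ∩ Ω) := hreg'
          _ ≤ μ (((Ω ∩ {y | g y < w j}) ∩ Metric.ball x r) ∪ (Ω ∩ {y | w j ≤ g y})) :=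
              measure_mono hcov
          _ ≤ μ ((Ω ∩ {y | g y < w j}) ∩ Metric.ball x r) + a j := measure_union_le _ _
      have := (ENNReal.add_le_add_iff_right (hafin j)).1 h2a
      exact this.trans (measure_mono hpre)
    have hprodRc : a (j+1) * a j ≤ (μ.prod μ) Rc := by
      rw [Measure.prod_apply hRcmeas]
      calc a (j+1) * a j = a j * a (j+1) := mul_comm _ _
        _ = ∫⁻ x in Ω ∩ {x | w (j+1) ≤ g x}, a j ∂μ := by rw [setLIntegral_const]
        _ ≤ ∫⁻ x in Ω ∩ {x | w (j+1) ≤ g x}, μ (Prod.mk x ⁻¹' Rc) ∂μ :=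
            setLIntegral_mono (measurable_measure_prodMk_left hRcmeas) hsec
        _ ≤ ∫⁻ x, μ (Prod.mk x ⁻¹' Rc) ∂μ := setLIntegral_le_lintegral _ _
    have hDj : ENNReal.ofReal (r ^ (-e)) * (a (j+1) * a j) ≤ D j := by
      have hsub : Rc ⊆ Q j := fun q hq => ⟨hq.1.1.2, hq.1.2.2⟩
      have hRcΩ : Rc ⊆ Ω ×ˢ Ω := fun q hq => ⟨hq.1.1.1, hq.1.2.1⟩
      have hres : ∫⁻ q in Rc, ker q ∂(μ.prod μ) = ∫⁻ q in Rc, ker q ∂ρ := by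
        rw [hρ, Measure.restrict_restrict hRcmeas, Set.inter_eq_self_of_subset_left hRcΩ]
      calc ENNReal.ofReal (r ^ (-e)) * (a (j+1) * a j)
          ≤ ENNReal.ofReal (r ^ (-e)) * (μ.prod μ) Rc := mul_le_mul_right hprodRc _
        _ = ∫⁻ _ in Rc, ENNReal.ofReal (r ^ (-e)) ∂(μ.prod μ) := (setLIntegral_const _ _).symm
        _ ≤ ∫⁻ q in Rc, ker q ∂(μ.prod μ) := by
            apply setLIntegral_mono hkermeas
            intro q hq
            have hdq : 0 < dist q.1 q.2 := by
              apply dist_pos.2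
              intro hqq
              have h1 : w (j+1) ≤ g q.1 := hq.1.1.2
              have h2 : g q.2 < w j := hq.1.2.2
              rw [hqq] at h1
              rw [hwsucc j] at h1
              linarith [hw0 j]
            apply ENNReal.ofReal_le_ofReal
            rw [Real.rpow_neg hr0.le, Real.rpow_neg dist_nonneg]
            exact inv_anti₀ (Real.rpow_pos_of_pos hdq e)
              (Real.rpow_le_rpow dist_nonneg hq.2.le he0.le)
        _ = ∫⁻ q in Rc, ker q ∂ρ := hres
        _ ≤ D j := lintegral_mono_set hsub
    have h1 : ENNReal.ofReal (r^(-e)) * ENNReal.ofReal (r^e) = 1 := by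
      rw [← ENNReal.ofReal_mul (Real.rpow_nonneg hr0.le _), ← Real.rpow_add hr0,
        neg_add_cancel, Real.rpow_zero, ENNReal.ofReal_one]
    have h2 : a j * (a j)⁻¹ = 1 := ENNReal.mul_inv_cancel hpos (hafin j)
    have hre : ENNReal.ofReal (r^e) = ENNReal.ofReal ((2/c₀)^(1+κ)) * (a j)^(1+κ) := by
      have hreal : r^e = (2/c₀)^(1+κ) * α^(1+κ) := by
        rw [hrdef, ← Real.rpow_mul (by positivity)]
        rw [show ν⁻¹ * e = 1+κ by rw [mul_comm]; exact heν]
        rw [show 2*α/c₀ = (2/c₀)*α by ring, Real.mul_rpow (by positivity) hα0.le]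
      rw [hreal, ENNReal.ofReal_mul (by positivity)]
      congr 1
      rw [← ENNReal.ofReal_rpow_of_pos hα0]
      congr 1
      rw [hα]
      exact ENNReal.ofReal_toReal (hafin j)
    have hsplit : (a j)^((1:ℝ)+κ) * (a j)⁻¹ = (a j)^κ := by
      rw [ENNReal.rpow_add 1 κ hpos (hafin j), ENNReal.rpow_one]
      rw [mul_comm (a j) ((a j)^κ), mul_assoc, h2, mul_one]
    calc a (j+1)
        = (ENNReal.ofReal (r^(-e)) * (a (j+1) * a j)) * (ENNReal.ofReal (r^e) * (a j)⁻¹) := by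
          rw [show (ENNReal.ofReal (r^(-e)) * (a (j+1) * a j)) * (ENNReal.ofReal (r^e) * (a j)⁻¹)
            = a (j+1) * ((ENNReal.ofReal (r^(-e)) * ENNReal.ofReal (r^e)) * (a j * (a j)⁻¹))
            from by ring, h1, h2, mul_one, mul_one]
      _ ≤ D j * (ENNReal.ofReal (r^e) * (a j)⁻¹) := mul_le_mul_left hDj _
      _ = ENNReal.ofReal ((2/c₀)^(1+κ)) * ((a j)^κ * D j) := by
          rw [hre]
          rw [show D j * (ENNReal.ofReal ((2/c₀)^(1+κ)) * (a j)^((1:ℝ)+κ) * (a j)⁻¹)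
            = ENNReal.ofReal ((2/c₀)^(1+κ)) * (((a j)^((1:ℝ)+κ) * (a j)⁻¹) * D j) from by ring]
          rw [hsplit]
  -- recursion in terms of T
  have hstepT : ∀ j : ℤ, a j ≤ ENNReal.ofReal m₀ → a j ≠ 0 →
      T (j+1) ≤ ENNReal.ofReal Cg * ((T j)^κ * (ENNReal.ofReal (w j ^ (2:ℝ)) * D j)) := by
    intro j hgood hpos
    have hwj := hw0 j
    have e1 : ENNReal.ofReal (w (j+1) ^ p) =
        ENNReal.ofReal ((2:ℝ)^p) * ENNReal.ofReal (w j ^ p) := by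
      rw [hwsucc j, Real.mul_rpow (by norm_num) hwj.le,
        ENNReal.ofReal_mul (by positivity)]
    have e3 : (T j)^κ = ENNReal.ofReal (w j ^ (p-2)) * (a j)^κ := by
      show (ENNReal.ofReal (w j ^ p) * a j)^κ = _
      rw [ENNReal.mul_rpow_of_nonneg _ _ hκ0.le]
      congr 1
      rw [ENNReal.ofReal_rpow_of_pos (Real.rpow_pos_of_pos hwj p)]
      congr 1
      rw [← Real.rpow_mul hwj.le, hκp]
    have e2 : ENNReal.ofReal (w j ^ p) =
        ENNReal.ofReal (w j ^ (p-2)) * ENNReal.ofReal (w j ^ (2:ℝ)) := by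
      rw [← ENNReal.ofReal_mul (by positivity), ← Real.rpow_add hwj]
      norm_num
    have hCgsplit : ENNReal.ofReal Cg =
        ENNReal.ofReal ((2:ℝ)^p) * ENNReal.ofReal ((2/c₀)^(1+κ)) := by
      rw [hCgdef, ENNReal.ofReal_mul (by positivity)]
    calc T (j+1) = ENNReal.ofReal (w (j+1) ^ p) * a (j+1) := rfl
      _ ≤ ENNReal.ofReal (w (j+1) ^ p) *
          (ENNReal.ofReal ((2/c₀)^(1+κ)) * ((a j)^κ * D j)) :=
          mul_le_mul_right (hstep j hgood hpos) _
      _ = ENNReal.ofReal Cg * ((ENNReal.ofReal (w j ^ (p-2)) * (a j)^κ) *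
          (ENNReal.ofReal (w j ^ (2:ℝ)) * D j)) := by
          rw [e1, e2, hCgsplit]; ring
      _ = ENNReal.ofReal Cg * ((T j)^κ * (ENNReal.ofReal (w j ^ (2:ℝ)) * D j)) := by
          rw [e3]
  -- the finite-window bound
  have hfinset : ∀ M N : ℕ, (∑ j ∈ Finset.Icc (-(M:ℤ)) (N:ℤ), T j) ≤ ENNReal.ofReal CS := by
    intro M N
    set F := Finset.Icc (-(M:ℤ)) (N:ℤ) with hF
    set SF := ∑ j ∈ F, T j with hSF
    have hSFfin : SF ≠ ⊤ := by
      rw [hSF]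
      exact (ENNReal.sum_lt_top.2 fun j _ => (hTfin j).lt_top).ne
    have hSFκfin : SF^κ ≠ ⊤ := (ENNReal.rpow_lt_top_of_nonneg hκ0.le hSFfin).ne
    have hpt : ∀ j ∈ F, T j ≤ (if (2:ℝ)^j ≤ t₁ then ENNReal.ofReal (((2:ℝ)^j) ^ p) else 0) * μ Ω
        + ENNReal.ofReal Cg * (SF^κ * (ENNReal.ofReal (w (j-1) ^ (2:ℝ)) * D (j-1))) := by
      intro j hjF
      have hTmu : T j ≤ ENNReal.ofReal (w j ^ p) * μ Ω := mul_le_mul_right (haμ j) _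
      by_cases hjM : j = -(M:ℤ)
      · have hwle : (2:ℝ)^j ≤ t₁ := by
          have h1 : (2:ℝ)^j ≤ (2:ℝ)^(0:ℤ) := by
            apply zpow_le_zpow_right₀ (by norm_num : (1:ℝ) ≤ 2)
            omega
          simp only [zpow_zero] at h1
          exact le_trans h1 (le_max_right _ _)
        rw [if_pos hwle]
        exact le_add_of_le_of_nonneg hTmu zero_le
      · have hj1F : j - 1 ∈ F := by
          rw [hF, Finset.mem_Icc] at hjF ⊢
          omega
        by_cases hz : a (j-1) = 0
        · have haj : a j = 0 := by
            have h := hamono (j-1)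
            rw [show j - 1 + 1 = j by ring] at h
            exact le_antisymm (h.trans_eq hz) zero_le
          have : T j = 0 := by show ENNReal.ofReal (w j ^ p) * a j = 0; rw [haj, mul_zero]
          rw [this]
          exact zero_le
        by_cases hgood : a (j-1) ≤ ENNReal.ofReal m₀
        · have h := hstepT (j-1) hgood hz
          rw [show j - 1 + 1 = j by ring] at h
          refine le_trans h (le_add_of_nonneg_of_le zero_le ?_)
          refine mul_le_mul_right (mul_le_mul_left ?_ _) _
          exact ENNReal.rpow_le_rpow (Finset.single_le_sum (fun _ _ => zero_le) hj1F) hκ0.le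
        · push_neg at hgood
          have hwb : w (j-1) ^ 2 * m₀ ≤ 1 := by
            have hlow : ENNReal.ofReal (w (j-1)^2) * a (j-1) ≤ 1 := by
              refine le_trans ?_ hA
              calc ENNReal.ofReal (w (j-1)^2) * a (j-1)
                  = ∫⁻ _ in Ω ∩ {x | w (j-1) ≤ g x}, ENNReal.ofReal (w (j-1)^2) ∂μ :=
                    (setLIntegral_const _ _).symm
                _ ≤ ∫⁻ x in Ω ∩ {x | w (j-1) ≤ g x}, ENNReal.ofReal (g x ^2) ∂μ := by
                    apply setLIntegral_mono ((hg.pow_const 2).ennreal_ofReal)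
                    intro x hx
                    apply ENNReal.ofReal_le_ofReal
                    have hx2 : w (j-1) ≤ g x := hx.2
                    nlinarith [hw0 (j-1)]
                _ ≤ ∫⁻ x in Ω, ENNReal.ofReal (g x ^2) ∂μ :=
                    lintegral_mono_set Set.inter_subset_left
            have h1 : ENNReal.ofReal (w (j-1)^2 * m₀) ≤ 1 := by
              rw [ENNReal.ofReal_mul (by positivity)]
              exact le_trans (mul_le_mul_right hgood.le _) hlow
            exact ENNReal.ofReal_le_one.1 h1
          have hwt₀ : w (j-1) ≤ t₀ := by
            rw [ht₀def]
            rw [Real.le_sqrt (hw0 _).le (by positivity)]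
            rw [le_div_iff₀ hm₀0]
            exact hwb
          have hwle : (2:ℝ)^j ≤ t₁ := by
            have hjw : (2:ℝ)^j = 2 * w (j-1) := by
              rw [← hwsucc (j-1)]
              show (2:ℝ)^j = (2:ℝ)^(j-1+1)
              congr 1
              ring
            rw [hjw]
            exact le_trans (by linarith) (le_max_left _ _)
          rw [if_pos hwle]
          exact le_add_of_le_of_nonneg hTmu zero_le
    have hsum := Finset.sum_le_sum hpt
    rw [← hSF] at hsum
    have hs1 : ∑ j ∈ F, (if (2:ℝ)^j ≤ t₁ then ENNReal.ofReal (((2:ℝ)^j) ^ p) else 0) * μ Ω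
        ≤ ENNReal.ofReal (cp * t₁^p) * μ Ω := by
      rw [← Finset.sum_mul]
      refine mul_le_mul_left ?_ _
      refine le_trans (ENNReal.sum_le_tsum F) ?_
      rw [hcpdef]
      exact tsum_dyadic_le p t₁ hp0 ht₁
    have hs2 : ∑ j ∈ F, ENNReal.ofReal Cg * (SF^κ * (ENNReal.ofReal (w (j-1) ^ (2:ℝ)) * D (j-1)))
        ≤ ENNReal.ofReal Cg * (SF^κ * ENNReal.ofReal (4/3)) := by
      rw [← Finset.mul_sum, ← Finset.mul_sum]
      refine mul_le_mul_right (mul_le_mul_right ?_ _) _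
      have hgen : ∑ j ∈ F, (fun i => ENNReal.ofReal (w i ^ (2:ℝ)) * D i) (j-1)
          ≤ ∑' i : ℤ, ENNReal.ofReal (w i ^ (2:ℝ)) * D i := by
        refine le_trans (ENNReal.sum_le_tsum F) (le_of_eq ?_)
        exact (Equiv.subRight (1:ℤ)).tsum_eq (fun i => ENNReal.ofReal (w i ^ (2:ℝ)) * D i)
      exact le_trans hgen hB1
    have hSFle : SF ≤ ENNReal.ofReal (cp * t₁^p) * μ Ω
        + ENNReal.ofReal Cg * (SF^κ * ENNReal.ofReal (4/3)) := by
      refine le_trans hsum ?_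
      rw [Finset.sum_add_distrib]
      exact add_le_add hs1 hs2
    have hRHSfin : ENNReal.ofReal (cp * t₁^p) * μ Ω
        + ENNReal.ofReal Cg * (SF^κ * ENNReal.ofReal (4/3)) ≠ ⊤ := by
      apply ENNReal.add_ne_top.2
      constructor
      · exact ENNReal.mul_ne_top ENNReal.ofReal_ne_top hΩfin
      · exact ENNReal.mul_ne_top ENNReal.ofReal_ne_top
          (ENNReal.mul_ne_top hSFκfin ENNReal.ofReal_ne_top)
    have hxineq : SF.toReal ≤ k1 + k2 * SF.toReal^κ := by
      have h := ENNReal.toReal_mono hRHSfin hSFle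
      rw [ENNReal.toReal_add (ENNReal.mul_ne_top ENNReal.ofReal_ne_top hΩfin)
        (ENNReal.mul_ne_top ENNReal.ofReal_ne_top
          (ENNReal.mul_ne_top hSFκfin ENNReal.ofReal_ne_top))] at h
      rw [ENNReal.toReal_mul, ENNReal.toReal_mul, ENNReal.toReal_mul] at h
      rw [ENNReal.toReal_ofReal (by positivity), ENNReal.toReal_ofReal (by positivity),
        ENNReal.toReal_ofReal (by norm_num : (0:ℝ) ≤ 4/3)] at h
      rw [← ENNReal.toReal_rpow] at h
      calc SF.toReal ≤ cp * t₁^p * (μ Ω).toReal + Cg * (SF.toReal^κ * (4/3)) := h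
        _ = k1 + k2 * SF.toReal^κ := by rw [hk1def, hk2def]; ring
    have hfinal := selfimprove κ k1 k2 SF.toReal hκ0 hκ1 ENNReal.toReal_nonneg hk10 hk20 hxineq
    calc SF = ENNReal.ofReal SF.toReal := (ENNReal.ofReal_toReal hSFfin).symm
      _ ≤ ENNReal.ofReal CS := ENNReal.ofReal_le_ofReal (by rw [hCSdef]; exact hfinal)
  -- sum over all of ℤ
  have hS : ∑' j : ℤ, T j ≤ ENNReal.ofReal CS := by
    rw [ENNReal.tsum_eq_iSup_sum]
    refine iSup_le fun E => ?_
    rcases E.eq_empty_or_nonempty with he | hne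
    · rw [he]
      simp only [Finset.sum_empty]
      exact zero_le
    · refine le_trans (Finset.sum_le_sum_of_subset ?_) (hfinset (-(E.min' hne)).toNat (E.max' hne).toNat)
      intro j hj
      rw [Finset.mem_Icc]
      have h1 := E.min'_le j hj
      have h2 := E.le_max' j hj
      omega
  -- final pointwise comparison and integration
  have hUmeas : ∀ j : ℤ, MeasurableSet {y : X | w j ≤ g y ∧ g y < w (j+1)} :=
    fun j => (measurableSet_le measurable_const hg).inter (measurableSet_lt hg measurable_const)
  have hpt2 : ∀ x : X, ENNReal.ofReal (g x ^ p) ≤ ENNReal.ofReal (g x ^ 2)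
      + ∑' j : ℤ, ({y : X | w j ≤ g y ∧ g y < w (j+1)}).indicator
          (fun _ => ENNReal.ofReal (w (j+1) ^ p)) x := by
    intro x
    by_cases hx1 : g x < 1
    · refine le_add_of_le_of_nonneg ?_ zero_le
      apply ENNReal.ofReal_le_ofReal
      rcases eq_or_lt_of_le (hgnn x) with h0 | h0
      · rw [← h0, Real.zero_rpow (by linarith : p ≠ 0)]
        positivity
      · calc g x ^ p ≤ g x ^ (2:ℝ) :=
            Real.rpow_le_rpow_of_exponent_ge h0 hx1.le (by linarith)
          _ = g x ^ 2 := Real.rpow_two _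
    · push_neg at hx1
      have hgx : 0 < g x := lt_of_lt_of_le one_pos hx1
      set j := ⌊Real.logb 2 (g x)⌋ with hjdef
      have h1 : w j ≤ g x := (zpow_le_iff hgx j).2 le_rfl
      have h2 : g x < w (j+1) := by
        by_contra hcon
        push_neg at hcon
        have := (zpow_le_iff hgx (j+1)).1 hcon
        omega
      refine le_trans ?_ (le_add_of_nonneg_of_le zero_le (ENNReal.le_tsum j))
      rw [Set.indicator_of_mem (show x ∈ {y : X | w j ≤ g y ∧ g y < w (j+1)} from ⟨h1, h2⟩)]
      exact ENNReal.ofReal_le_ofReal (Real.rpow_le_rpow (hgnn x) h2.le hp0.le)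
  have hint : (∫⁻ x in Ω, ENNReal.ofReal (g x ^ p) ∂μ)
      ≤ 1 + ENNReal.ofReal ((2:ℝ)^p) * ENNReal.ofReal CS := by
    have hsecond : (∫⁻ x in Ω, (∑' j : ℤ, ({y : X | w j ≤ g y ∧ g y < w (j+1)}).indicator
        (fun _ => ENNReal.ofReal (w (j+1) ^ p)) x) ∂μ)
        ≤ ENNReal.ofReal ((2:ℝ)^p) * ENNReal.ofReal CS := by
      rw [lintegral_tsum (fun j => (measurable_const.indicator (hUmeas j)).aemeasurable)]
      have hterm : ∀ j : ℤ, (∫⁻ x in Ω, ({y : X | w j ≤ g y ∧ g y < w (j+1)}).indicator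
          (fun _ => ENNReal.ofReal (w (j+1) ^ p)) x ∂μ) ≤ ENNReal.ofReal ((2:ℝ)^p) * T j := by
        intro j
        rw [lintegral_indicator (hUmeas j), setLIntegral_const,
          Measure.restrict_apply (hUmeas j)]
        have hms : {y : X | w j ≤ g y ∧ g y < w (j+1)} ∩ Ω ⊆ Ω ∩ {x | w j ≤ g x} :=
          fun y hy => ⟨hy.2, hy.1.1⟩
        have e1 : ENNReal.ofReal (w (j+1) ^ p) =
            ENNReal.ofReal ((2:ℝ)^p) * ENNReal.ofReal (w j ^ p) := by
          rw [hwsucc j, Real.mul_rpow (by norm_num) (hw0 j).le,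
            ENNReal.ofReal_mul (by positivity)]
        rw [e1, mul_assoc]
        exact mul_le_mul_right (mul_le_mul_right (measure_mono hms) _) _
      calc ∑' j : ℤ, (∫⁻ x in Ω, ({y : X | w j ≤ g y ∧ g y < w (j+1)}).indicator
            (fun _ => ENNReal.ofReal (w (j+1) ^ p)) x ∂μ)
          ≤ ∑' j : ℤ, ENNReal.ofReal ((2:ℝ)^p) * T j := ENNReal.tsum_le_tsum hterm
        _ = ENNReal.ofReal ((2:ℝ)^p) * ∑' j : ℤ, T j := ENNReal.tsum_mul_left
        _ ≤ ENNReal.ofReal ((2:ℝ)^p) * ENNReal.ofReal CS := mul_le_mul_right hS _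
    calc ∫⁻ x in Ω, ENNReal.ofReal (g x ^ p) ∂μ
        ≤ ∫⁻ x in Ω, (ENNReal.ofReal (g x ^ 2)
          + ∑' j : ℤ, ({y : X | w j ≤ g y ∧ g y < w (j+1)}).indicator
              (fun _ => ENNReal.ofReal (w (j+1) ^ p)) x) ∂μ :=
          lintegral_mono (fun x => hpt2 x)
      _ = (∫⁻ x in Ω, ENNReal.ofReal (g x ^ 2) ∂μ)
          + ∫⁻ x in Ω, (∑' j : ℤ, ({y : X | w j ≤ g y ∧ g y < w (j+1)}).indicator
              (fun _ => ENNReal.ofReal (w (j+1) ^ p)) x) ∂μ :=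
          lintegral_add_left ((hg.pow_const 2).ennreal_ofReal) _
      _ ≤ 1 + ENNReal.ofReal ((2:ℝ)^p) * ENNReal.ofReal CS := add_le_add hA hsecond
  refine le_trans hint ?_
  rw [← ENNReal.ofReal_mul (by positivity), ← ENNReal.ofReal_one,
    ← ENNReal.ofReal_add (by norm_num) (by positivity)]


theorem wrap {X : Type*} [MeasurableSpace X] [MetricSpace X] [BorelSpace X]
    [SecondCountableTopology X]
    (μ : Measure X) [SigmaFinite μ]
    (Ω : Set X) (hΩ : MeasurableSet Ω) (hΩfin : μ Ω ≠ ⊤)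
    (ν s p c₀ R₀ E : ℝ) (hν : 0 < ν) (hp : 2 < p) (hs : 2 * s / ν = (p - 2) / p)
    (hc₀ : 0 < c₀) (hR₀ : 0 < R₀) (hE : E = ν + 2*s)
    (hreg : ∀ x ∈ Ω, ∀ r : ℝ, 0 < r → r ≤ R₀ →
      ENNReal.ofReal (c₀ * r ^ ν) ≤ μ (Metric.ball x r ∩ Ω)) :
    ∃ C > 0, ∀ g : X → ℝ, Measurable g →
      IntegrableOn (fun x => g x ^ 2) Ω μ →
      IntegrableOn (fun q : X × X => (g q.1 - g q.2)^2 / dist q.1 q.2 ^ E)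
        (Ω ×ˢ Ω) (μ.prod μ) →
      (∫ x in Ω, |g x| ^ p ∂μ) ^ (1/p) ≤
        C * Real.sqrt ((∫ x in Ω, g x ^ 2 ∂μ) +
          ∫ q in Ω ×ˢ Ω, (g q.1 - g q.2)^2 / dist q.1 q.2 ^ E ∂(μ.prod μ)) := by
  subst hE
  obtain ⟨C₀, hC₀, hmain⟩ := master μ Ω hΩ hΩfin ν s p c₀ R₀ hν hp hs hc₀ hR₀ hreg
  have hp0 : (0:ℝ) < p := by linarith
  refine ⟨C₀ ^ (1/p), Real.rpow_pos_of_pos hC₀ _, ?_⟩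
  intro g hg hInt2 hIntG
  set E := ν + 2*s with hEdef
  have hGnn : ∀ q : X × X, 0 ≤ (g q.1 - g q.2)^2 / dist q.1 q.2 ^ E := by
    intro q
    apply div_nonneg (sq_nonneg _) (Real.rpow_nonneg dist_nonneg _)
  set Ar := ∫ x in Ω, g x ^ 2 ∂μ with hAr
  set Br := ∫ q in Ω ×ˢ Ω, (g q.1 - g q.2)^2 / dist q.1 q.2 ^ E ∂(μ.prod μ) with hBr
  have hAr0 : 0 ≤ Ar := integral_nonneg (fun x => sq_nonneg _)
  have hBr0 : 0 ≤ Br := integral_nonneg hGnn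
  rcases eq_or_lt_of_le (by positivity : (0:ℝ) ≤ Ar + Br) with hzero | hpos
  · -- degenerate case : g = 0 a.e.
    have hArz : Ar = 0 := by linarith [hAr0, hBr0, hzero.symm]
    have hg2 : (fun x => g x ^ 2) =ᶠ[ae (μ.restrict Ω)] 0 := by
      rw [← integral_eq_zero_iff_of_nonneg (fun x => sq_nonneg (g x)) hInt2]
      exact hArz
    have hgp : (fun x => |g x| ^ p) =ᶠ[ae (μ.restrict Ω)] 0 := by
      filter_upwards [hg2] with x hx
      have hgx : g x = 0 := by simpa using hx
      simp [hgx, Real.zero_rpow hp0.ne']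
    have hLHS : (∫ x in Ω, |g x| ^ p ∂μ) = 0 := by
      rw [integral_congr_ae hgp]
      simp
    rw [hLHS, ← hzero, Real.sqrt_zero, mul_zero,
      Real.zero_rpow (by positivity : 1/p ≠ 0)]
  · -- main case
    set t := Real.sqrt (Ar + Br) with htdef
    have ht0 : 0 < t := Real.sqrt_pos.2 hpos
    have ht2 : t^2 = Ar + Br := Real.sq_sqrt hpos.le
    set h : X → ℝ := fun x => |g x| / t with hhdef
    have hhmeas : Measurable h := hg.abs.div_const t
    have hhnn : ∀ x, 0 ≤ h x := fun x => div_nonneg (abs_nonneg _) ht0.le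
    -- lintegral facts
    have hA_lin : (∫⁻ x in Ω, ENNReal.ofReal (g x ^ 2) ∂μ) = ENNReal.ofReal Ar := by
      rw [hAr, ofReal_integral_eq_lintegral_ofReal hInt2
        (Filter.Eventually.of_forall fun x => sq_nonneg _)]
    have hB_lin : (∫⁻ q in Ω ×ˢ Ω, ENNReal.ofReal
        ((g q.1 - g q.2)^2 / dist q.1 q.2 ^ E) ∂(μ.prod μ)) = ENNReal.ofReal Br := by
      rw [hBr, ofReal_integral_eq_lintegral_ofReal hIntG
        (Filter.Eventually.of_forall hGnn)]
    have hAh : (∫⁻ x in Ω, ENNReal.ofReal (h x ^ 2) ∂μ) ≤ 1 := by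
      have hpt : ∀ x, ENNReal.ofReal (h x ^ 2)
          = ENNReal.ofReal (1/t^2) * ENNReal.ofReal (g x ^ 2) := by
        intro x
        rw [← ENNReal.ofReal_mul (by positivity)]
        congr 1
        rw [hhdef]
        rw [div_pow, sq_abs]
        field_simp
      calc (∫⁻ x in Ω, ENNReal.ofReal (h x ^ 2) ∂μ)
          = ENNReal.ofReal (1/t^2) * ∫⁻ x in Ω, ENNReal.ofReal (g x ^ 2) ∂μ := by
            rw [← lintegral_const_mul _ ((hg.pow_const 2).ennreal_ofReal)]
            exact lintegral_congr fun x => hpt x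
        _ = ENNReal.ofReal (1/t^2) * ENNReal.ofReal Ar := by rw [hA_lin]
        _ = ENNReal.ofReal (Ar / t^2) := by
            rw [← ENNReal.ofReal_mul (by positivity)]
            congr 1
            ring
        _ ≤ 1 := by
            apply ENNReal.ofReal_le_one.2
            rw [div_le_one (by positivity), ht2]
            linarith
    have hBh : (∫⁻ q in Ω ×ˢ Ω, ENNReal.ofReal
        ((h q.1 - h q.2)^2 / dist q.1 q.2 ^ E) ∂(μ.prod μ)) ≤ 1 := by
      have hpt : ∀ q : X × X, ENNReal.ofReal ((h q.1 - h q.2)^2 / dist q.1 q.2 ^ E)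
          ≤ ENNReal.ofReal (1/t^2) * ENNReal.ofReal
            ((g q.1 - g q.2)^2 / dist q.1 q.2 ^ E) := by
        intro q
        rw [← ENNReal.ofReal_mul (by positivity)]
        apply ENNReal.ofReal_le_ofReal
        have h1 : (h q.1 - h q.2)^2 ≤ (1/t^2) * (g q.1 - g q.2)^2 := by
          rw [hhdef]
          have habs : |(|g q.1| - |g q.2|)| ≤ |g q.1 - g q.2| := abs_abs_sub_abs_le_abs_sub _ _
          have hsq : (|g q.1| - |g q.2|)^2 ≤ (g q.1 - g q.2)^2 := by
            rw [← sq_abs (|g q.1| - |g q.2|), ← sq_abs (g q.1 - g q.2)]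
            exact pow_le_pow_left₀ (abs_nonneg _) habs 2
          rw [div_sub_div_same, div_pow]
          rw [div_eq_mul_inv, mul_comm]
          rw [one_div]
          exact mul_le_mul_of_nonneg_left hsq (by positivity)
        calc (h q.1 - h q.2)^2 / dist q.1 q.2 ^ E
            ≤ ((1/t^2) * (g q.1 - g q.2)^2) / dist q.1 q.2 ^ E := by
              rw [div_eq_mul_inv, div_eq_mul_inv]
              exact mul_le_mul_of_nonneg_right h1
                (inv_nonneg.2 (Real.rpow_nonneg dist_nonneg _))
          _ = (1/t^2) * ((g q.1 - g q.2)^2 / dist q.1 q.2 ^ E) := by ring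
      have hmeasG : Measurable (fun q : X × X =>
          ENNReal.ofReal ((g q.1 - g q.2)^2 / dist q.1 q.2 ^ E)) :=
        (((hg.comp measurable_fst).sub (hg.comp measurable_snd)).pow_const 2).div
          (measurable_dist.pow measurable_const) |>.ennreal_ofReal
      calc (∫⁻ q in Ω ×ˢ Ω, ENNReal.ofReal
            ((h q.1 - h q.2)^2 / dist q.1 q.2 ^ E) ∂(μ.prod μ))
          ≤ ∫⁻ q in Ω ×ˢ Ω, ENNReal.ofReal (1/t^2) * ENNReal.ofReal
              ((g q.1 - g q.2)^2 / dist q.1 q.2 ^ E) ∂(μ.prod μ) :=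
            lintegral_mono fun q => hpt q
        _ = ENNReal.ofReal (1/t^2) * ∫⁻ q in Ω ×ˢ Ω, ENNReal.ofReal
              ((g q.1 - g q.2)^2 / dist q.1 q.2 ^ E) ∂(μ.prod μ) :=
            lintegral_const_mul _ hmeasG
        _ = ENNReal.ofReal (1/t^2) * ENNReal.ofReal Br := by rw [hB_lin]
        _ = ENNReal.ofReal (Br / t^2) := by
            rw [← ENNReal.ofReal_mul (by positivity)]
            congr 1
            ring
        _ ≤ 1 := by
            apply ENNReal.ofReal_le_one.2
            rw [div_le_one (by positivity), ht2]
            linarith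
    have hkey := hmain h hhmeas hhnn hAh hBh
    have hgp_eq : ∀ x, ENNReal.ofReal (|g x| ^ p)
        = ENNReal.ofReal (t ^ p) * ENNReal.ofReal (h x ^ p) := by
      intro x
      rw [← ENNReal.ofReal_mul (Real.rpow_nonneg ht0.le _)]
      congr 1
      rw [hhdef]
      show |g x| ^ p = t ^ p * (|g x| / t) ^ p
      rw [Real.div_rpow (abs_nonneg _) ht0.le]
      field_simp
    have hlint : (∫⁻ x in Ω, ENNReal.ofReal (|g x| ^ p) ∂μ) ≤ ENNReal.ofReal (t^p * C₀) := by
      calc ∫⁻ x in Ω, ENNReal.ofReal (|g x| ^ p) ∂μ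
          = ENNReal.ofReal (t^p) * ∫⁻ x in Ω, ENNReal.ofReal (h x ^ p) ∂μ := by
            rw [← lintegral_const_mul _ ((hhmeas.pow measurable_const).ennreal_ofReal)]
            exact lintegral_congr hgp_eq
        _ ≤ ENNReal.ofReal (t^p) * ENNReal.ofReal C₀ := mul_le_mul_right hkey _
        _ = ENNReal.ofReal (t^p * C₀) := (ENNReal.ofReal_mul (Real.rpow_nonneg ht0.le _)).symm
    have hIreal : (∫ x in Ω, |g x| ^ p ∂μ) ≤ t^p * C₀ := by
      rw [integral_eq_lintegral_of_nonneg_ae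
        (Filter.Eventually.of_forall fun x => Real.rpow_nonneg (abs_nonneg _) p)
        ((hg.abs.pow measurable_const).aestronglyMeasurable)]
      calc (∫⁻ x in Ω, ENNReal.ofReal (|g x| ^ p) ∂μ).toReal
          ≤ (ENNReal.ofReal (t^p * C₀)).toReal :=
            ENNReal.toReal_mono ENNReal.ofReal_ne_top hlint
        _ = t^p * C₀ := ENNReal.toReal_ofReal (by positivity)
    have hInn : 0 ≤ ∫ x in Ω, |g x| ^ p ∂μ :=
      integral_nonneg fun x => Real.rpow_nonneg (abs_nonneg _) _
    calc (∫ x in Ω, |g x| ^ p ∂μ) ^ (1/p) ≤ (t^p * C₀) ^ (1/p) :=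
          Real.rpow_le_rpow hInn hIreal (by positivity)
      _ = C₀ ^ (1/p) * t := by
          rw [Real.mul_rpow (by positivity) hC₀.le, ← Real.rpow_mul ht0.le,
            mul_one_div, div_self hp0.ne', Real.rpow_one, mul_comm]
      _ = C₀ ^ (1/p) * Real.sqrt (Ar + Br) := by rw [htdef]



lemma reg1 : ∀ x ∈ Set.Ioo (0:ℝ) 1, ∀ r : ℝ, 0 < r → r ≤ 1 →
    ENNReal.ofReal ((1/2) * r ^ (1:ℝ)) ≤ volume (Metric.ball x r ∩ Set.Ioo 0 1) := by
  intro x hx r hr hr1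
  obtain ⟨hx0, hx1⟩ := hx
  rw [Real.ball_eq_Ioo, Set.Ioo_inter_Ioo, Real.volume_Ioo]
  apply ENNReal.ofReal_le_ofReal
  rw [Real.rpow_one]
  rcases le_total (x+r) 1 with h1 | h1 <;> rcases le_total (x-r) 0 with h2 | h2
  · rw [min_eq_left h1, max_eq_right h2]; linarith
  · rw [min_eq_left h1, max_eq_left h2]; linarith
  · rw [min_eq_right h1, max_eq_right h2]; linarith
  · rw [min_eq_right h1, max_eq_left h2]; linarith

lemma cube_eval_measurable (n : ℕ) (i : Fin n) :
    Measurable (fun x : EuclideanSpace ℝ (Fin n) => x i) :=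
  (measurable_pi_apply i).comp (MeasurableEquiv.toLp 2 (Fin n → ℝ)).symm.measurable

lemma cube_measurable (n : ℕ) :
    MeasurableSet {x : EuclideanSpace ℝ (Fin n) | ∀ i, |x i| < 1} := by
  have : {x : EuclideanSpace ℝ (Fin n) | ∀ i, |x i| < 1}
      = ⋂ i, {x : EuclideanSpace ℝ (Fin n) | |x i| < 1} := by
    ext x; simp
  rw [this]
  exact MeasurableSet.iInter fun i =>
    measurableSet_lt ((cube_eval_measurable n i).abs) measurable_const

lemma cube_eq_preimage (n : ℕ) :
    {x : EuclideanSpace ℝ (Fin n) | ∀ i, |x i| < 1}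
      = (MeasurableEquiv.toLp 2 (Fin n → ℝ)).symm ⁻¹'
          (Set.univ.pi fun _ : Fin n => Set.Ioo (-1:ℝ) 1) := by
  ext x
  simp only [Set.mem_setOf_eq, Set.mem_preimage, Set.mem_pi, Set.mem_univ, true_implies,
    Set.mem_Ioo]
  constructor
  · intro h i; have := h i; rw [abs_lt] at this; exact this
  · intro h i; rw [abs_lt]; exact h i

lemma cube_vol_fin (n : ℕ) :
    volume {x : EuclideanSpace ℝ (Fin n) | ∀ i, |x i| < 1} ≠ ⊤ := by
  rw [cube_eq_preimage n,
    (EuclideanSpace.volume_preserving_symm_measurableEquiv_toLp (Fin n)).measure_preimage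
      (MeasurableSet.univ_pi fun _ => measurableSet_Ioo).nullMeasurableSet]
  rw [volume_pi_pi]
  simp

lemma cube_reg (n : ℕ) (hn : 1 ≤ n) :
    ∀ x ∈ {x : EuclideanSpace ℝ (Fin n) | ∀ i, |x i| < 1}, ∀ r : ℝ, 0 < r → r ≤ 1 →
      ENNReal.ofReal (((Real.sqrt n)⁻¹)^n * r ^ (n:ℝ))
        ≤ volume (Metric.ball x r ∩ {x : EuclideanSpace ℝ (Fin n) | ∀ i, |x i| < 1}) := by
  intro x hx r hr hr1
  haveI : NeZero n := ⟨by omega⟩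
  have hsn : 1 ≤ Real.sqrt n := by
    rw [show (1:ℝ) = Real.sqrt 1 by simp]
    apply Real.sqrt_le_sqrt
    exact_mod_cast hn
  have hsn0 : 0 < Real.sqrt n := by linarith
  set b := r / Real.sqrt n with hb
  have hb0 : 0 < b := by positivity
  have hb1 : b ≤ 1 := by
    rw [hb, div_le_one hsn0]; linarith
  set S := Set.univ.pi (fun i : Fin n => Set.Ioo (max (x i - b) (-1)) (min (x i + b) 1))
    with hS
  have hsub : (MeasurableEquiv.toLp 2 (Fin n → ℝ)).symm ⁻¹' S
      ⊆ Metric.ball x r ∩ {x : EuclideanSpace ℝ (Fin n) | ∀ i, |x i| < 1} := by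
    intro y hy
    simp only [Set.mem_preimage, hS, Set.mem_pi, Set.mem_univ, true_implies,
      Set.mem_Ioo] at hy
    have hy' : ∀ i : Fin n, (x i - b) ⊔ -1 < y i ∧ y i < (x i + b) ⊓ 1 := hy
    have hyi : ∀ i, |y i - x i| < b ∧ |y i| < 1 := by
      intro i
      obtain ⟨h1, h2⟩ := hy' i
      constructor
      · rw [abs_lt]
        constructor
        · have := le_max_left (x i - b) (-1); linarith
        · have := min_le_left (x i + b) 1; linarith
      · rw [abs_lt]
        constructor
        · have := le_max_right (x i - b) (-1); linarith
        · have := min_le_right (x i + b) 1; linarith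
    constructor
    · rw [Metric.mem_ball, EuclideanSpace.dist_eq]
      have hlt : ∑ i, dist (y i) (x i) ^ 2 < r ^ 2 := by
        have hterm : ∀ i : Fin n, dist (y i) (x i) ^ 2 < b ^ 2 := by
          intro i
          have h := (hyi i).1
          rw [Real.dist_eq]
          have habs : 0 ≤ |y i - x i| := abs_nonneg _
          nlinarith
        calc ∑ i, dist (y i) (x i) ^ 2 < ∑ _i : Fin n, b ^ 2 := by
              apply Finset.sum_lt_sum_of_nonempty
              · exact Finset.univ_nonempty (α := Fin n)
              · intro i _; exact hterm i
          _ = n * b ^ 2 := by rw [Finset.sum_const]; simp [mul_comm]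
          _ = r ^ 2 := by
              rw [hb, div_pow, Real.sq_sqrt (by positivity : (0:ℝ) ≤ (n:ℝ))]
              field_simp
      calc Real.sqrt (∑ i, dist (y i) (x i) ^ 2) < Real.sqrt (r^2) := by
            apply Real.sqrt_lt_sqrt (by positivity) hlt
        _ = r := Real.sqrt_sq hr.le
    · exact fun i => (hyi i).2
  have hSmeas : MeasurableSet S := MeasurableSet.univ_pi fun _ => measurableSet_Ioo
  calc ENNReal.ofReal (((Real.sqrt n)⁻¹)^n * r ^ (n:ℝ))
      = ENNReal.ofReal (b ^ n) := by
        congr 1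
        rw [Real.rpow_natCast, hb, div_pow, inv_pow]
        ring
    _ ≤ ∏ i : Fin n, ENNReal.ofReal (min (x i + b) 1 - max (x i - b) (-1)) := by
        rw [ENNReal.ofReal_pow hb0.le]
        have hlen : ∀ i : Fin n, ENNReal.ofReal b
            ≤ ENNReal.ofReal (min (x i + b) 1 - max (x i - b) (-1)) := by
          intro i
          apply ENNReal.ofReal_le_ofReal
          have hxi := abs_lt.1 (hx i)
          rcases le_total (x i + b) 1 with h1 | h1 <;> rcases le_total (x i - b) (-1) with h2 | h2
          · rw [min_eq_left h1, max_eq_right h2]; linarith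
          · rw [min_eq_left h1, max_eq_left h2]; linarith
          · rw [min_eq_right h1, max_eq_right h2]; linarith
          · rw [min_eq_right h1, max_eq_left h2]; linarith
        calc ENNReal.ofReal b ^ n = ∏ _i : Fin n, ENNReal.ofReal b := by
              rw [Finset.prod_const]; simp
          _ ≤ ∏ i : Fin n, ENNReal.ofReal (min (x i + b) 1 - max (x i - b) (-1)) :=
              Finset.prod_le_prod' fun i _ => hlen i
    _ = volume S := by
        rw [hS, volume_pi_pi]
        congr 1
        ext i
        rw [Real.volume_Ioo]
    _ = volume ((MeasurableEquiv.toLp 2 (Fin n → ℝ)).symm ⁻¹' S) :=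
        ((EuclideanSpace.volume_preserving_symm_measurableEquiv_toLp (Fin n)).measure_preimage
          hSmeas.nullMeasurableSet).symm
    _ ≤ volume (Metric.ball x r ∩ {x : EuclideanSpace ℝ (Fin n) | ∀ i, |x i| < 1}) :=
        measure_mono hsub


end S12


open S12

theorem stmt12 (d : ℕ) (hd : 2 ≤ d) (p : ℝ) (hp2 : 2 < p)
    (hpd : d = 2 ∨ p < 2*((d:ℝ)-1)/((d:ℝ)-2))
    (β l : ℝ)
    (hβ : β = (p-2)/(4*((d:ℝ)-1) - 2*p*((d:ℝ)-2)))
    (hl : l = 1/(2*β*((d:ℝ)-1)+1)) :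
    (0 < l ∧ l < 1) ∧
    (∃ C > 0, ∀ g : ℝ → ℝ, Measurable g →
      IntegrableOn (fun x => g x ^ 2) (Set.Ioo 0 1) →
      IntegrableOn
        (fun q : ℝ × ℝ => (g q.1 - g q.2)^2 / |q.1 - q.2| ^ (1 + 2*(l*β)))
        (Set.Ioo 0 1 ×ˢ Set.Ioo 0 1) →
      (∫ x in Set.Ioo (0:ℝ) 1, |g x| ^ p) ^ (1/p) ≤
        C * Real.sqrt ((∫ x in Set.Ioo (0:ℝ) 1, g x ^ 2) +
          ∫ q in Set.Ioo (0:ℝ) 1 ×ˢ Set.Ioo (0:ℝ) 1,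
            (g q.1 - g q.2)^2 / |q.1 - q.2| ^ (1 + 2*(l*β)))) ∧
    (∃ C > 0, ∀ g : EuclideanSpace ℝ (Fin (d-1)) → ℝ, Measurable g →
      IntegrableOn (fun x => g x ^ 2) {x : EuclideanSpace ℝ (Fin (d-1)) | ∀ i, |x i| < 1} →
      IntegrableOn
        (fun q : EuclideanSpace ℝ (Fin (d-1)) × EuclideanSpace ℝ (Fin (d-1)) =>
          (g q.1 - g q.2)^2 / dist q.1 q.2 ^ (((d:ℝ)-1) + 2*((1-l)/2)))
        ({x : EuclideanSpace ℝ (Fin (d-1)) | ∀ i, |x i| < 1} ×ˢ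
          {x : EuclideanSpace ℝ (Fin (d-1)) | ∀ i, |x i| < 1}) →
      (∫ x in {x : EuclideanSpace ℝ (Fin (d-1)) | ∀ i, |x i| < 1}, |g x| ^ p) ^ (1/p) ≤
        C * Real.sqrt
          ((∫ x in {x : EuclideanSpace ℝ (Fin (d-1)) | ∀ i, |x i| < 1}, g x ^ 2) +
            ∫ q in {x : EuclideanSpace ℝ (Fin (d-1)) | ∀ i, |x i| < 1} ×ˢ
                {x : EuclideanSpace ℝ (Fin (d-1)) | ∀ i, |x i| < 1},
              (g q.1 - g q.2)^2 / dist q.1 q.2 ^ (((d:ℝ)-1) + 2*((1-l)/2)))) := by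
  have hp0 : (0:ℝ) < p := by linarith
  have hd2 : (2:ℝ) ≤ (d:ℝ) := by exact_mod_cast hd
  have hd1 : (1:ℝ) ≤ (d:ℝ) - 1 := by linarith
  set D := 4*((d:ℝ)-1) - 2*p*((d:ℝ)-2) with hD
  have hD0 : 0 < D := by
    rcases hpd with h2 | hlt
    · rw [hD]
      subst h2
      norm_num
    · rcases eq_or_lt_of_le (by linarith : (0:ℝ) ≤ (d:ℝ) - 2) with h0 | h0
      · rw [hD, ← h0]
        ring_nf
        nlinarith
      · have hmul := (lt_div_iff₀ h0).1 hlt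
        rw [hD]
        nlinarith
  have hβpos : 0 < β := by rw [hβ]; exact div_pos (by linarith) hD0
  have hden : 2*β*((d:ℝ)-1)+1 = 2*p/D := by
    rw [hβ]
    field_simp
    ring
  have hden1 : (1:ℝ) < 2*β*((d:ℝ)-1)+1 := by nlinarith
  have hl0 : 0 < l := by rw [hl]; positivity
  have hl1 : l < 1 := by
    rw [hl]
    rw [div_lt_one (by linarith)]
    exact hden1
  have hlval : l = D/(2*p) := by
    rw [hl, hden, one_div_div]
  have hlβ : l*β = 1/2 - 1/p := by
    have hDne : 4*((d:ℝ)-1) - 2*p*((d:ℝ)-2) ≠ 0 := hD0.ne'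
    rw [hlval, hβ, hD]
    field_simp
  have h1l : (1-l)/2 = ((d:ℝ)-1) * (1/2 - 1/p) := by
    rw [hlval, hD]
    field_simp
    ring
  refine ⟨⟨hl0, hl1⟩, ?_, ?_⟩
  · -- 1-dimensional embedding
    obtain ⟨C, hC, hmain⟩ := wrap (volume : Measure ℝ) (Set.Ioo 0 1) measurableSet_Ioo
      (by simp [Real.volume_Ioo]) 1 (l*β) p (1/2) 1 (1 + 2*(l*β)) one_pos hp2
      (by rw [hlβ]; field_simp)
      (by norm_num) one_pos (by ring) reg1
    refine ⟨C, hC, ?_⟩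
    intro g hg h2 hG
    have hG' : IntegrableOn
        (fun q : ℝ × ℝ => (g q.1 - g q.2)^2 / dist q.1 q.2 ^ (1 + 2*(l*β)))
        (Set.Ioo 0 1 ×ˢ Set.Ioo 0 1) (volume.prod volume) := by
      rw [← MeasureTheory.Measure.volume_eq_prod]
      simpa only [Real.dist_eq] using hG
    have hres := hmain g hg h2 hG'
    simpa only [Real.dist_eq, ← MeasureTheory.Measure.volume_eq_prod] using hres
  · -- (d-1)-dimensional embedding
    have hn : 1 ≤ d - 1 := by omega
    have hcast : ((d - 1 : ℕ) : ℝ) = (d:ℝ) - 1 := by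
      push_cast [Nat.cast_sub (by omega : 1 ≤ d)]
      ring
    have hc₀pos : (0:ℝ) < ((Real.sqrt (d-1 : ℕ))⁻¹)^(d-1 : ℕ) := by
      have h1 : (1:ℝ) ≤ ((d - 1 : ℕ):ℝ) := by rw [hcast]; linarith
      have : (0:ℝ) < Real.sqrt ((d-1 : ℕ):ℝ) := Real.sqrt_pos.2 (by linarith)
      positivity
    obtain ⟨C, hC, hmain⟩ := wrap (volume : Measure (EuclideanSpace ℝ (Fin (d-1))))
      {x : EuclideanSpace ℝ (Fin (d-1)) | ∀ i, |x i| < 1}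
      (cube_measurable (d-1)) (cube_vol_fin (d-1))
      ((d-1 : ℕ):ℝ) ((1-l)/2) p ((Real.sqrt (d-1 : ℕ))⁻¹^(d-1 : ℕ)) 1
      (((d:ℝ)-1) + 2*((1-l)/2))
      (by rw [hcast]; linarith) hp2
      (by
        rw [h1l, hcast]
        have hd1' : ((d:ℝ)-1) ≠ 0 := by linarith
        field_simp)
      hc₀pos one_pos (by rw [hcast]) (cube_reg (d-1) hn)
    refine ⟨C, hC, ?_⟩
    intro g hg h2 hG
    have hG' : IntegrableOn
        (fun q : EuclideanSpace ℝ (Fin (d-1)) × EuclideanSpace ℝ (Fin (d-1)) =>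
          (g q.1 - g q.2)^2 / dist q.1 q.2 ^ (((d:ℝ)-1) + 2*((1-l)/2)))
        ({x : EuclideanSpace ℝ (Fin (d-1)) | ∀ i, |x i| < 1} ×ˢ
          {x : EuclideanSpace ℝ (Fin (d-1)) | ∀ i, |x i| < 1}) (volume.prod volume) := by
      rw [← MeasureTheory.Measure.volume_eq_prod]
      exact hG
    have hres := hmain g hg h2 hG'
    simpa only [← MeasureTheory.Measure.volume_eq_prod] using hres
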